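/- Let u1, u2 ∈ ℝ^D and let h(1), ..., h(D) be i.i.d. random variables uniformly distributed on {1, ..., k}. Define w_{1,j} = Σ_{i=1}^{D} u_{1,i} 1{h(i) = j} and w_{2,j} = Σ_{i=1}^{D} u_{2,i} 1{h(i) = j} for j = 1, ..., k, and the Count-Min estimator â_{cm} = Σ_{j=1}^{k} w_{1,j} w_{2,j}. Then E[â_{cm}] = a + (1/k)·[(Σ_{i=1}^{D} u_{1,i})(Σ_{i=1}^{D} u_{2,i}) − a], where a = Σ_{i=1}^{D} u_{1,i} u_{2,i}; in particular â_{cm} is a biased estimator of a whenever (Σ_i u_{1,i})(Σ_i u_{2,i}) ≠ a. -/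

import Mathlib

open MeasureTheory ProbabilityTheory

/-- Let `u1, u2 ∈ ℝ^D` and let `h(1), …, h(D)` be i.i.d. uniform on
`{1, …, k}`. With `w_{1,j} = Σ_i u_{1,i} 1{h(i)=j}` and `w_{2,j} = Σ_i u_{2,i} 1{h(i)=j}`, the
Count-Min estimator `â_cm = Σ_j w_{1,j} w_{2,j}` satisfies
`E[â_cm] = a + (1/k)·[(Σ_i u_{1,i})(Σ_i u_{2,i}) − a]` where `a = Σ_i u_{1,i} u_{2,i}`;
in particular `â_cm` is biased whenever `(Σ_i u_{1,i})(Σ_i u_{2,i}) ≠ a`. -/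
theorem stmt17 {Ω : Type*} [MeasurableSpace Ω] (μ : Measure Ω) [IsProbabilityMeasure μ]
    (D k : ℕ) (hk : 1 ≤ k) (u1 u2 : Fin D → ℝ)
    (h : Fin D → Ω → Fin k)
    (hhmeas : ∀ i, Measurable (h i))
    (hindep : iIndepFun h μ)
    (hunif : ∀ i (j : Fin k), μ {ω | h i ω = j} = (k : ENNReal)⁻¹) :
    (∫ ω, ∑ j : Fin k,
        (∑ i : Fin D, u1 i * (if h i ω = j then (1 : ℝ) else 0))
          * (∑ i : Fin D, u2 i * (if h i ω = j then (1 : ℝ) else 0)) ∂μ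
      = (∑ i : Fin D, u1 i * u2 i)
        + (1 / (k : ℝ)) * ((∑ i : Fin D, u1 i) * (∑ i : Fin D, u2 i)
            - ∑ i : Fin D, u1 i * u2 i))
    ∧ ((∑ i : Fin D, u1 i) * (∑ i : Fin D, u2 i) ≠ ∑ i : Fin D, u1 i * u2 i →
        ∫ ω, ∑ j : Fin k,
            (∑ i : Fin D, u1 i * (if h i ω = j then (1 : ℝ) else 0))
              * (∑ i : Fin D, u2 i * (if h i ω = j then (1 : ℝ) else 0)) ∂μ
          ≠ ∑ i : Fin D, u1 i * u2 i) := by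
  classical
  have hk0 : (k : ℝ) ≠ 0 := by positivity
  have hkE0 : (k : ENNReal) ≠ 0 := Nat.cast_ne_zero.mpr (by omega)
  -- measurability of the equality set
  have hSm : ∀ i i' : Fin D, MeasurableSet {ω | h i ω = h i' ω} := by
    intro i i'
    have : {ω | h i ω = h i' ω} = ⋃ j : Fin k, (h i ⁻¹' {j} ∩ h i' ⁻¹' {j}) := by
      ext ω
      simp only [Set.mem_setOf_eq, Set.mem_iUnion, Set.mem_inter_iff, Set.mem_preimage,
        Set.mem_singleton_iff]
      constructor
      · intro hh; exact ⟨h i' ω, hh, rfl⟩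
      · rintro ⟨j, h1, h2⟩; rw [h1, h2]
    rw [this]
    exact MeasurableSet.iUnion fun j =>
      ((hhmeas i (measurableSet_singleton j)).inter (hhmeas i' (measurableSet_singleton j)))
  -- probability that two distinct hashes collide
  have hprob : ∀ i i' : Fin D, i ≠ i' → μ {ω | h i ω = h i' ω} = (k : ENNReal)⁻¹ := by
    intro i i' hne
    have hind : IndepFun (h i) (h i') μ := hindep.indepFun hne
    have hset : {ω | h i ω = h i' ω} = ⋃ j : Fin k, (h i ⁻¹' {j} ∩ h i' ⁻¹' {j}) := by
      ext ω
      simp only [Set.mem_setOf_eq, Set.mem_iUnion, Set.mem_inter_iff, Set.mem_preimage,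
        Set.mem_singleton_iff]
      constructor
      · intro hh; exact ⟨h i' ω, hh, rfl⟩
      · rintro ⟨j, h1, h2⟩; rw [h1, h2]
    rw [hset, measure_iUnion]
    · have hm : ∀ j : Fin k, μ (h i ⁻¹' {j} ∩ h i' ⁻¹' {j}) = (k : ENNReal)⁻¹ * (k : ENNReal)⁻¹ := by
        intro j
        rw [hind.measure_inter_preimage_eq_mul _ _ (measurableSet_singleton j)
          (measurableSet_singleton j)]
        have e1 : h i ⁻¹' {j} = {ω | h i ω = j} := rfl
        have e2 : h i' ⁻¹' {j} = {ω | h i' ω = j} := rfl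
        rw [e1, e2, hunif i j, hunif i' j]
      rw [tsum_fintype]
      simp_rw [hm]
      rw [Finset.sum_const, Finset.card_univ, Fintype.card_fin, nsmul_eq_mul,
        ← mul_assoc, ENNReal.mul_inv_cancel hkE0 (by simp), one_mul]
    · intro j j' hjj'
      simp only [Function.onFun, Set.disjoint_left]
      rintro ω ⟨h1, h2⟩ ⟨h3, h4⟩
      exact hjj' (by simp only [Set.mem_preimage, Set.mem_singleton_iff] at h1 h3; rw [← h1, ← h3])
    · intro j
      exact ((hhmeas i (measurableSet_singleton j)).inter (hhmeas i' (measurableSet_singleton j)))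
  -- pointwise rewriting of the integrand
  have hpt : ∀ ω, (∑ j : Fin k,
        (∑ i : Fin D, u1 i * (if h i ω = j then (1 : ℝ) else 0))
          * (∑ i : Fin D, u2 i * (if h i ω = j then (1 : ℝ) else 0)))
      = ∑ i : Fin D, ∑ i' : Fin D,
          u1 i * u2 i' * (if h i ω = h i' ω then (1 : ℝ) else 0) := by
    intro ω
    have key : ∀ x y : Fin k,
        (∑ j : Fin k, (if x = j then (1 : ℝ) else 0) * (if y = j then (1 : ℝ) else 0))
          = if x = y then (1 : ℝ) else 0 := by
      intro x y
      rw [Finset.sum_eq_single x]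
      · simp [eq_comm]
      · intro j _ hj
        simp [Ne.symm hj]
      · simp
    calc (∑ j : Fin k,
        (∑ i : Fin D, u1 i * (if h i ω = j then (1 : ℝ) else 0))
          * (∑ i : Fin D, u2 i * (if h i ω = j then (1 : ℝ) else 0)))
        = ∑ j : Fin k, ∑ i : Fin D, ∑ i' : Fin D,
            u1 i * u2 i' * ((if h i ω = j then (1:ℝ) else 0) * (if h i' ω = j then (1:ℝ) else 0)) := by
          refine Finset.sum_congr rfl fun j _ => ?_
          rw [Finset.sum_mul_sum]
          refine Finset.sum_congr rfl fun i _ => Finset.sum_congr rfl fun i' _ => by ring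
      _ = ∑ i : Fin D, ∑ i' : Fin D, ∑ j : Fin k,
            u1 i * u2 i' * ((if h i ω = j then (1:ℝ) else 0) * (if h i' ω = j then (1:ℝ) else 0)) := by
          rw [Finset.sum_comm]
          exact Finset.sum_congr rfl fun i _ => Finset.sum_comm
      _ = ∑ i : Fin D, ∑ i' : Fin D,
            u1 i * u2 i' * (if h i ω = h i' ω then (1 : ℝ) else 0) := by
          refine Finset.sum_congr rfl fun i _ => Finset.sum_congr rfl fun i' _ => ?_
          rw [← Finset.mul_sum, key]
  -- integrability of each term
  have hind_eq : ∀ i i' : Fin D,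
      (fun ω => (if h i ω = h i' ω then (1 : ℝ) else 0))
        = Set.indicator {ω | h i ω = h i' ω} (fun _ => (1:ℝ)) := by
    intro i i'
    ext ω
    by_cases hc : h i ω = h i' ω <;> simp [Set.indicator_apply, hc]
  have hint : ∀ i i' : Fin D, Integrable
      (fun ω => u1 i * u2 i' * (if h i ω = h i' ω then (1 : ℝ) else 0)) μ := by
    intro i i'
    refine Integrable.const_mul ?_ _
    rw [hind_eq i i']
    exact (integrable_const (1:ℝ)).indicator (hSm i i')
  -- compute the integral of each term
  have hterm : ∀ i i' : Fin D,
      (∫ ω, u1 i * u2 i' * (if h i ω = h i' ω then (1 : ℝ) else 0) ∂μ)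
        = u1 i * u2 i' * (if i = i' then (1:ℝ) else (k : ℝ)⁻¹) := by
    intro i i'
    rw [integral_const_mul, hind_eq i i', integral_indicator_const _ (hSm i i')]
    by_cases hc : i = i'
    · subst hc
      have : {ω | h i ω = h i ω} = Set.univ := by ext ω; simp
      simp [this]
    · rw [measureReal_def, hprob i i' hc]
      simp [ENNReal.toReal_inv, hc]
  -- putting it together
  have hmain : (∫ ω, ∑ j : Fin k,
        (∑ i : Fin D, u1 i * (if h i ω = j then (1 : ℝ) else 0))
          * (∑ i : Fin D, u2 i * (if h i ω = j then (1 : ℝ) else 0)) ∂μ)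
      = (∑ i : Fin D, u1 i * u2 i)
        + (1 / (k : ℝ)) * ((∑ i : Fin D, u1 i) * (∑ i : Fin D, u2 i)
            - ∑ i : Fin D, u1 i * u2 i) := by
    have : (∫ ω, ∑ j : Fin k,
        (∑ i : Fin D, u1 i * (if h i ω = j then (1 : ℝ) else 0))
          * (∑ i : Fin D, u2 i * (if h i ω = j then (1 : ℝ) else 0)) ∂μ)
        = ∑ i : Fin D, ∑ i' : Fin D,
            u1 i * u2 i' * (if i = i' then (1:ℝ) else (k : ℝ)⁻¹) := by
      rw [integral_congr_ae (Filter.Eventually.of_forall hpt)]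
      rw [integral_finset_sum _ fun i _ => integrable_finset_sum _ fun i' _ => hint i i']
      refine Finset.sum_congr rfl fun i _ => ?_
      rw [integral_finset_sum _ fun i' _ => hint i i']
      exact Finset.sum_congr rfl fun i' _ => hterm i i'
    rw [this]
    have expand : ∀ i i' : Fin D, u1 i * u2 i' * (if i = i' then (1:ℝ) else (k : ℝ)⁻¹)
        = u1 i * u2 i' * (k : ℝ)⁻¹ + (if i = i' then u1 i * u2 i' * (1 - (k:ℝ)⁻¹) else 0) := by
      intro i i'
      by_cases hc : i = i'
      · simp [hc]; ring
      · simp [hc]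
    simp_rw [expand, Finset.sum_add_distrib, Finset.sum_ite_eq]
    simp only [Finset.mem_univ, if_true]
    have h1 : ∑ x : Fin D, ∑ x1 : Fin D, u1 x * u2 x1 * (k:ℝ)⁻¹
        = (∑ i : Fin D, u1 i) * (∑ i : Fin D, u2 i) * (k:ℝ)⁻¹ := by
      rw [Finset.sum_mul_sum]
      simp_rw [Finset.sum_mul]
    have h2 : ∑ x : Fin D, u1 x * u2 x * (1 - (k:ℝ)⁻¹)
        = (∑ i : Fin D, u1 i * u2 i) * (1 - (k:ℝ)⁻¹) := by
      rw [Finset.sum_mul]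
    rw [h1, h2]
    field_simp
    ring
  refine ⟨hmain, fun hne => ?_⟩
  rw [hmain]
  intro hcontra
  apply hne
  have : (1 / (k : ℝ)) * ((∑ i : Fin D, u1 i) * (∑ i : Fin D, u2 i)
            - ∑ i : Fin D, u1 i * u2 i) = 0 := by linarith
  have hkinv : (1 / (k:ℝ)) ≠ 0 := by positivity
  have := (mul_eq_zero.mp this).resolve_left hkinv
  linarith
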